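/- Let h(x) = x·log(x) − x + e^{−1/x} for x > 0. Then h is convex on the interval (0, 1/log 2); that is, its second derivative h''(x) = 1/x − (2/x³)e^{−1/x} + (1/x⁴)e^{−1/x} is nonnegative there. -/

import Mathlib

noncomputable def h (x : ℝ) : ℝ := x * Real.log x - x + Real.exp (-1 / x)

noncomputable def g (x : ℝ) : ℝ := Real.log x + Real.exp (-1 / x) / x ^ 2

lemma hasDerivAt_exp_neg_inv {x : ℝ} (hx : 0 < x) :
    HasDerivAt (fun y : ℝ => Real.exp (-1 / y)) (Real.exp (-1 / x) * (x ^ 2)⁻¹) x := by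
  have h1 : HasDerivAt (fun y : ℝ => -1 / y) ((x ^ 2)⁻¹) x := by
    have := (hasDerivAt_inv hx.ne').neg
    exact this.congr_deriv (by simp) |>.congr_of_eventuallyEq (Filter.Eventually.of_forall fun y => by simp [neg_div])
  simpa using h1.exp

lemma hasDerivAt_h {x : ℝ} (hx : 0 < x) : HasDerivAt h (g x) x := by
  have h1 : HasDerivAt (fun y : ℝ => y * Real.log y) (Real.log x + 1) x := by
    have := (hasDerivAt_id x).mul (Real.hasDerivAt_log hx.ne')
    exact this.congr_deriv (by simp [mul_inv_cancel₀ hx.ne', add_comm])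
  have h2 := hasDerivAt_exp_neg_inv hx
  have := (h1.sub (hasDerivAt_id x)).add h2
  refine this.congr_deriv ?_
  unfold g
  field_simp
  ring

lemma hasDerivAt_g {x : ℝ} (hx : 0 < x) :
    HasDerivAt g (1 / x - (2 / x ^ 3) * Real.exp (-1 / x) + (1 / x ^ 4) * Real.exp (-1 / x)) x := by
  have hx2 : (x ^ 2) ≠ 0 := pow_ne_zero 2 hx.ne'
  have h1 := Real.hasDerivAt_log hx.ne'
  have h2 : HasDerivAt (fun y : ℝ => Real.exp (-1 / y) / y ^ 2)
      (Real.exp (-1 / x) * (x ^ 2)⁻¹ / x ^ 2 + Real.exp (-1 / x) * -(2 * x / (x ^ 2) ^ 2)) x := by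
    have hv : HasDerivAt (fun y : ℝ => (y ^ 2 : ℝ)) (2 * x) x := by
      simpa using hasDerivAt_pow 2 x
    have := (hasDerivAt_exp_neg_inv hx).div hv hx2
    refine this.congr_deriv ?_
    field_simp
    ring
  have := h1.add h2
  refine this.congr_deriv ?_
  field_simp
  ring

lemma key_ineq {x : ℝ} (hx : 0 < x) :
    0 ≤ 1 / x - (2 / x ^ 3) * Real.exp (-1 / x) + (1 / x ^ 4) * Real.exp (-1 / x) := by
  set E := Real.exp (-1 / x) with hE
  have hE0 : 0 < E := Real.exp_pos _
  have hkey : E * (x + 1) ≤ x := by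
    have h1 : 1 + 1 / x ≤ Real.exp (1 / x) := by
      have := Real.add_one_le_exp (1 / x)
      linarith
    have h2 : E = (Real.exp (1 / x))⁻¹ := by
      rw [hE, ← Real.exp_neg]; ring_nf
    have hep : 0 < Real.exp (1 / x) := Real.exp_pos _
    rw [h2]
    rw [inv_mul_le_iff₀ hep]
    have h3 := mul_le_mul_of_nonneg_right h1 hx.le
    have h4 : (1 + 1 / x) * x = x + 1 := by field_simp
    linarith
  have hmain : 0 ≤ x ^ 3 - 2 * x * E + E := by
    rcases le_or_gt (2 * x) 1 with hc | hc
    · nlinarith [pow_pos hx 3]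
    · nlinarith [mul_pos hx (mul_pos hx hx), sq_nonneg (x - 1), mul_pos hx hx]
  have hx4 : (0:ℝ) < x ^ 4 := pow_pos hx 4
  have heq : 1 / x - (2 / x ^ 3) * E + (1 / x ^ 4) * E = (x ^ 3 - 2 * x * E + E) / x ^ 4 := by
    field_simp
  rw [heq]
  exact div_nonneg hmain hx4.le

theorem stmt0 :
    ConvexOn ℝ (Set.Ioo 0 (1 / Real.log 2)) h ∧
    ∀ x ∈ Set.Ioo (0:ℝ) (1 / Real.log 2),
      0 ≤ 1 / x - (2 / x ^ 3) * Real.exp (-1 / x) + (1 / x ^ 4) * Real.exp (-1 / x) := by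
  constructor
  · have hsub : Set.Ioo (0:ℝ) (1 / Real.log 2) ⊆ Set.Ioi 0 := fun y hy => hy.1
    apply convexOn_of_deriv2_nonneg (convex_Ioo _ _)
    · intro y hy
      exact (hasDerivAt_h (hy.1)).continuousAt.continuousWithinAt
    · intro y hy
      rw [interior_Ioo] at hy
      exact (hasDerivAt_h hy.1).differentiableAt.differentiableWithinAt
    · intro y hy
      rw [interior_Ioo] at hy
      have hev : deriv h =ᶠ[nhds y] g := by
        filter_upwards [Ioi_mem_nhds hy.1] with z hz
        exact (hasDerivAt_h hz).deriv
      exact ((hasDerivAt_g hy.1).differentiableAt.congr_of_eventuallyEq hev).differentiableWithinAt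
    · intro y hy
      rw [interior_Ioo] at hy
      have hev : deriv h =ᶠ[nhds y] g := by
        filter_upwards [Ioi_mem_nhds hy.1] with z hz
        exact (hasDerivAt_h hz).deriv
      have : deriv (deriv h) y = deriv g y := hev.deriv_eq
      simp only [Function.iterate_succ, Function.iterate_zero, Function.comp_apply, id]
      rw [this, (hasDerivAt_g hy.1).deriv]
      exact key_ineq hy.1
  · intro x hx
    exact key_ineq hx.1
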